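/- For complex s with 0 < Re(s) < 1/2 and real τ > 0, ∫₀^∞ sin(tτ)/sinh^{2s}(t/2) dt = (sinh(πτ)/√π) · Γ(s+iτ)Γ(s−iτ)Γ(1−s)/Γ(1/2+s), and the integral converges absolutely. -/

import Mathlib

open Complex Real MeasureTheory Set Filter

/-- Bessel function of the first kind of complex order `ν` at positive real argument `x`. -/
noncomputable def besselJ (ν : ℂ) (x : ℝ) : ℂ :=
  ∑' k : ℕ, ((-1 : ℂ) ^ k / ((k.factorial : ℂ) * Complex.Gamma (ν + k + 1))) *
    ((x : ℂ) / 2) ^ (ν + 2 * (k : ℂ))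

/-- Bessel function of the second kind of complex order `ν`. -/
noncomputable def besselY (ν : ℂ) (x : ℝ) : ℂ :=
  (besselJ ν x * Complex.cos ((π : ℂ) * ν) - besselJ (-ν) x) / Complex.sin ((π : ℂ) * ν)

/-- Modified Bessel function of the first kind of complex order `ν`. -/
noncomputable def besselI (ν : ℂ) (x : ℝ) : ℂ :=
  ∑' k : ℕ, (1 / ((k.factorial : ℂ) * Complex.Gamma (ν + k + 1))) *
    ((x : ℂ) / 2) ^ (ν + 2 * (k : ℂ))

/-- Modified Bessel function of the second kind (Macdonald function). -/
noncomputable def besselK (ν : ℂ) (x : ℝ) : ℂ :=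
  ((π : ℂ) / 2) * (besselI (-ν) x - besselI ν x) / Complex.sin ((π : ℂ) * ν)

/-- Anger function `𝐉_ν(z) = (1/π) ∫₀^π cos (ν θ − z sin θ) dθ`. -/
noncomputable def angerJ (ν : ℂ) (z : ℝ) : ℂ :=
  (1 / (π : ℂ)) * ∫ θ in (0 : ℝ)..π, Complex.cos (ν * (θ : ℂ) - (z : ℂ) * Real.sin θ)

/-- The Weber type kernel away from `τ = 0`. -/
noncomputable def weberW₀ (α x τ : ℝ) : ℝ :=
  (besselJ ((α : ℂ) + τ * I) (Real.sqrt x) * besselY ((α : ℂ) - τ * I) (Real.sqrt x)).im /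
    Real.sinh (π * τ)

/-- The Weber type kernel `W_α(x,τ) = Im[J_{α+iτ}(√x) Y_{α−iτ}(√x)]/sinh(πτ)`,
defined at `τ = 0` by continuity. -/
noncomputable def weberW (α x τ : ℝ) : ℝ :=
  if τ = 0 then limUnder (nhdsWithin 0 {(0 : ℝ)}ᶜ) (weberW₀ α x)
  else weberW₀ α x τ

private lemma exp_image : (fun t : ℝ => Real.exp (-t)) '' (Ioi 0) = Ioo 0 1 := by
  ext y
  constructor
  · rintro ⟨t, ht, rfl⟩
    exact ⟨Real.exp_pos _, Real.exp_lt_one_iff.mpr (by simpa using ht)⟩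
  · rintro ⟨h0, h1⟩
    exact ⟨-Real.log y, by simpa using Real.log_neg h0 h1, by simp [Real.exp_log h0]⟩

private lemma cpow_exp_neg (t : ℝ) (a : ℂ) :
    ((Real.exp (-t) : ℝ) : ℂ) ^ a = Complex.exp (-a * t) := by
  rw [Complex.cpow_def_of_ne_zero (by exact_mod_cast (Real.exp_pos _).ne')]
  rw [← Complex.ofReal_log (Real.exp_pos _).le, Real.log_exp]
  push_cast
  ring_nf

private lemma substExp (a b : ℂ) (ha : 0 < a.re) (hb : 0 < b.re) :
    IntegrableOn (fun t : ℝ => Complex.exp (-a * t) * ((1 - Real.exp (-t) : ℝ) : ℂ) ^ (b - 1))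
      (Ioi 0) ∧
    ∫ t in Ioi (0:ℝ), Complex.exp (-a * t) * ((1 - Real.exp (-t) : ℝ) : ℂ) ^ (b - 1)
      = Complex.Gamma a * Complex.Gamma b / Complex.Gamma (a + b) := by
  set g : ℝ → ℂ := fun u => (u : ℂ) ^ (a - 1) * (1 - (u : ℂ)) ^ (b - 1) with hg
  have hderiv : ∀ x ∈ Ioi (0:ℝ), HasDerivWithinAt (fun t : ℝ => Real.exp (-t))
      (-Real.exp (-x)) (Ioi 0) x := by
    intro x _
    have : HasDerivAt (fun t : ℝ => Real.exp (-t)) (-Real.exp (-x)) x := by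
      convert (hasDerivAt_neg x).exp using 1; ring
    exact this.hasDerivWithinAt
  have hinj : InjOn (fun t : ℝ => Real.exp (-t)) (Ioi 0) :=
    (Real.exp_injective.comp neg_injective).injOn
  have hkey : ∀ t ∈ Ioi (0:ℝ), |(-Real.exp (-t))| • g (Real.exp (-t))
      = Complex.exp (-a * t) * ((1 - Real.exp (-t) : ℝ) : ℂ) ^ (b - 1) := by
    intro t ht
    have h1 : |(-Real.exp (-t))| = Real.exp (-t) := by
      rw [abs_neg, abs_of_pos (Real.exp_pos _)]
    rw [h1, hg]
    simp only [real_smul]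
    have h2 : ((Real.exp (-t) : ℝ) : ℂ) * ((Real.exp (-t) : ℝ) : ℂ) ^ (a - 1)
        = Complex.exp (-a * t) := by
      rw [cpow_exp_neg, Complex.ofReal_exp, ← Complex.exp_add]
      congr 1
      push_cast
      ring
    have h3 : (1 - ((Real.exp (-t) : ℝ) : ℂ)) = ((1 - Real.exp (-t) : ℝ) : ℂ) := by push_cast; ring
    rw [h3, ← mul_assoc, h2]
  have hbeta := Complex.betaIntegral_convergent ha hb
  have hgInt : IntegrableOn g (Ioo 0 1) := by
    have := (intervalIntegrable_iff_integrableOn_Ioc_of_le (by norm_num : (0:ℝ) ≤ 1)).mp hbeta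
    exact this.mono_set Ioo_subset_Ioc_self
  have hiff := integrableOn_image_iff_integrableOn_abs_deriv_smul measurableSet_Ioi hderiv hinj g
  rw [exp_image] at hiff
  have hInt : IntegrableOn (fun t : ℝ => Complex.exp (-a * t) *
      ((1 - Real.exp (-t) : ℝ) : ℂ) ^ (b - 1)) (Ioi 0) := by
    refine ((hiff.mp hgInt).congr_fun ?_ measurableSet_Ioi)
    intro t ht; exact hkey t ht
  refine ⟨hInt, ?_⟩
  have hchg := integral_image_eq_integral_abs_deriv_smul measurableSet_Ioi hderiv hinj g
  rw [exp_image] at hchg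
  have hIoo : ∫ u in Ioo (0:ℝ) 1, g u = Complex.betaIntegral a b := by
    rw [Complex.betaIntegral, intervalIntegral.integral_of_le (by norm_num : (0:ℝ) ≤ 1),
      ← MeasureTheory.integral_Ioc_eq_integral_Ioo]
  have hGab : Complex.Gamma (a + b) ≠ 0 :=
    Complex.Gamma_ne_zero_of_re_pos (by rw [Complex.add_re]; positivity)
  have hGG := Complex.Gamma_mul_Gamma_eq_betaIntegral ha hb
  rw [setIntegral_congr_fun measurableSet_Ioi hkey] at hchg
  rw [← hchg, hIoo, hGG, mul_comm, mul_div_assoc, div_self hGab, mul_one]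

private lemma pw (s : ℂ) (τ t : ℝ) (ht : 0 < t) :
    (Real.sin (t * τ) : ℂ) / ((Real.sinh (t / 2) : ℂ)) ^ (2 * s)
    = (2:ℂ) ^ (2*s) / (2*I) *
      (Complex.exp (-(s - ↑τ*I) * t) * ((1 - Real.exp (-t) : ℝ) : ℂ) ^ (-(2*s))
       - Complex.exp (-(s + ↑τ*I) * t) * ((1 - Real.exp (-t) : ℝ) : ℂ) ^ (-(2*s))) := by
  have hsp : 0 < Real.sinh (t/2) := Real.sinh_pos_iff.mpr (by linarith)
  have hone : 0 < 1 - Real.exp (-t) := by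
    have := Real.exp_lt_one_iff.mpr (neg_lt_zero.mpr ht); linarith
  have hprod : Real.sinh (t/2) = Real.exp (t/2) * (1 - Real.exp (-t)) / 2 := by
    rw [Real.sinh_eq, mul_sub, mul_one, ← Real.exp_add]
    ring_nf
  have hlog : Real.log (Real.sinh (t/2))
      = t/2 + Real.log (1 - Real.exp (-t)) - Real.log 2 := by
    rw [hprod, Real.log_div (by positivity) two_ne_zero,
      Real.log_mul (Real.exp_ne_zero _) hone.ne', Real.log_exp]
  have hd : ((Real.sinh (t/2) : ℝ) : ℂ) ^ (2*s)
      = Complex.exp (2*s * ((t:ℂ)/2 + (Real.log (1 - Real.exp (-t)) : ℂ) - (Real.log 2 : ℂ))) := by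
    rw [Complex.cpow_def_of_ne_zero (by exact_mod_cast hsp.ne'),
      ← Complex.ofReal_log hsp.le, hlog]
    push_cast
    ring_nf
  have h1m : ((1 - Real.exp (-t) : ℝ) : ℂ) ^ (-(2*s))
      = Complex.exp (-(2*s) * (Real.log (1 - Real.exp (-t)) : ℂ)) := by
    rw [Complex.cpow_def_of_ne_zero (by exact_mod_cast hone.ne'),
      ← Complex.ofReal_log hone.le, mul_comm]
  have h2c : (2:ℂ) ^ (2*s) = Complex.exp (2*s * (Real.log 2 : ℂ)) := by
    rw [show (2:ℂ) = ((2:ℝ) : ℂ) by norm_num,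
      Complex.cpow_def_of_ne_zero (by norm_num),
      ← Complex.ofReal_log (by norm_num : (0:ℝ) ≤ 2), mul_comm]
  have hsin : (Real.sin (t * τ) : ℂ)
      = (Complex.exp (-((t*τ : ℝ) : ℂ) * I) - Complex.exp (((t*τ : ℝ) : ℂ) * I)) * I / 2 := by
    rw [Complex.ofReal_sin]; rfl
  rw [hsin, hd, h1m, h2c]
  have hc : ∀ z : ℂ, z / (2*I) = -(z*I)/2 := by
    intro z
    field_simp
    linear_combination z * Complex.I_mul_I
  rw [hc]
  set U := Complex.exp ((t:ℂ) * ↑τ * I) with hU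
  set R := Complex.exp (s * (t:ℂ)) with hR
  set Q := Complex.exp (2*s * (Real.log (1 - Real.exp (-t)) : ℂ)) with hQ
  set P := Complex.exp (2*s * (Real.log 2 : ℂ)) with hP
  have e1 : Complex.exp (2*s * ((t:ℂ)/2 + (Real.log (1 - Real.exp (-t)) : ℂ) - (Real.log 2 : ℂ)))
      = R * Q / P := by
    rw [hR, hQ, hP, ← Complex.exp_add, ← Complex.exp_sub]
    congr 1; ring
  have e2 : Complex.exp (-(s - ↑τ*I) * t) = U / R := by
    rw [hU, hR, ← Complex.exp_sub]; congr 1; ring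
  have e3 : Complex.exp (-(s + ↑τ*I) * t) = (R * U)⁻¹ := by
    rw [hU, hR, ← Complex.exp_add, ← Complex.exp_neg]; congr 1; ring
  have e4 : Complex.exp (-(2*s) * (Real.log (1 - Real.exp (-t)) : ℂ)) = Q⁻¹ := by
    rw [hQ, ← Complex.exp_neg]; congr 1; ring
  have e5 : Complex.exp (-((t*τ : ℝ) : ℂ) * I) = U⁻¹ := by
    rw [hU, ← Complex.exp_neg]; congr 1; push_cast; ring
  have e6 : Complex.exp (((t*τ : ℝ) : ℂ) * I) = U := by
    rw [hU]; congr 1; push_cast; ring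
  rw [e1, e2, e3, e4, e5, e6]
  have hUne : U ≠ 0 := Complex.exp_ne_zero _
  have hRne : R ≠ 0 := Complex.exp_ne_zero _
  have hQne : Q ≠ 0 := Complex.exp_ne_zero _
  have hPne : P ≠ 0 := Complex.exp_ne_zero _
  simp only [div_eq_mul_inv, mul_inv, inv_inv]
  ring

private lemma gammaAlg (s : ℂ) (hs1 : 0 < s.re) (hs2 : s.re < 1/2) (τ : ℝ) :
    (2:ℂ)^(2*s)/(2*I) *
      (Complex.Gamma (s - ↑τ*I) * Complex.Gamma (1-2*s) / Complex.Gamma (1 - (s + ↑τ*I))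
       - Complex.Gamma (s + ↑τ*I) * Complex.Gamma (1-2*s) / Complex.Gamma (1 - (s - ↑τ*I)))
    = ((Real.sinh (π*τ) / Real.sqrt π : ℝ) : ℂ) *
      (Complex.Gamma (s + ↑τ*I) * Complex.Gamma (s - ↑τ*I) * Complex.Gamma (1-s) /
        Complex.Gamma (1/2 + s)) := by
  have hre_p : (s + ↑τ*I).re = s.re := by simp
  have hre_m : (s - ↑τ*I).re = s.re := by simp
  have hP : Complex.Gamma (s + ↑τ*I) ≠ 0 :=
    Complex.Gamma_ne_zero_of_re_pos (by rw [hre_p]; exact hs1)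
  have hM : Complex.Gamma (s - ↑τ*I) ≠ 0 :=
    Complex.Gamma_ne_zero_of_re_pos (by rw [hre_m]; exact hs1)
  have hG1p : Complex.Gamma (1 - (s + ↑τ*I)) ≠ 0 := by
    refine Complex.Gamma_ne_zero_of_re_pos ?_
    have : (1 - (s + ↑τ*I)).re = 1 - s.re := by simp
    rw [this]; linarith
  have hG1m : Complex.Gamma (1 - (s - ↑τ*I)) ≠ 0 := by
    refine Complex.Gamma_ne_zero_of_re_pos ?_
    have : (1 - (s - ↑τ*I)).re = 1 - s.re := by simp
    rw [this]; linarith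
  have hGh : Complex.Gamma (1/2 + s) ≠ 0 := by
    refine Complex.Gamma_ne_zero_of_re_pos ?_
    have : ((1:ℂ)/2 + s).re = 1/2 + s.re := by simp
    rw [this]; linarith
  have hGmh : Complex.Gamma (1/2 - s) ≠ 0 := by
    refine Complex.Gamma_ne_zero_of_re_pos ?_
    have : ((1:ℂ)/2 - s).re = 1/2 - s.re := by simp
    rw [this]; linarith
  have hG1s : Complex.Gamma (1 - s) ≠ 0 := by
    refine Complex.Gamma_ne_zero_of_re_pos ?_
    have : ((1:ℂ) - s).re = 1 - s.re := by simp
    rw [this]; linarith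
  have hpow : (2:ℂ)^(2*s) ≠ 0 := by
    rw [Complex.cpow_def_of_ne_zero two_ne_zero]; exact Complex.exp_ne_zero _
  have hsqrt : ((Real.sqrt π : ℝ) : ℂ) ≠ 0 := by
    exact_mod_cast (Real.sqrt_pos.mpr Real.pi_pos).ne'
  have hπ : ((π : ℝ) : ℂ) ≠ 0 := Complex.ofReal_ne_zero.mpr Real.pi_ne_zero
  -- reflection at s ± iτ
  have R1 := Complex.Gamma_mul_Gamma_one_sub (s + ↑τ*I)
  have hsinp_ne : Complex.sin (↑π * (s + ↑τ*I)) ≠ 0 := by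
    intro h; rw [h, div_zero] at R1; exact mul_ne_zero hP hG1p R1
  have F1 := (eq_div_iff hsinp_ne).mp R1
  have hG1pval : Complex.Gamma (1 - (s + ↑τ*I))
      = ↑π / (Complex.Gamma (s + ↑τ*I) * Complex.sin (↑π * (s + ↑τ*I))) := by
    rw [eq_div_iff (mul_ne_zero hP hsinp_ne)]; linear_combination F1
  have R2 := Complex.Gamma_mul_Gamma_one_sub (s - ↑τ*I)
  have hsinm_ne : Complex.sin (↑π * (s - ↑τ*I)) ≠ 0 := by
    intro h; rw [h, div_zero] at R2; exact mul_ne_zero hM hG1m R2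
  have F2 := (eq_div_iff hsinm_ne).mp R2
  have hG1mval : Complex.Gamma (1 - (s - ↑τ*I))
      = ↑π / (Complex.Gamma (s - ↑τ*I) * Complex.sin (↑π * (s - ↑τ*I))) := by
    rw [eq_div_iff (mul_ne_zero hM hsinm_ne)]; linear_combination F2
  -- duplication
  have dup := Complex.Gamma_mul_Gamma_add_half ((1:ℂ)/2 - s)
  rw [show (1:ℂ)/2 - s + 1/2 = 1 - s by ring, show 2*((1:ℂ)/2-s) = 1-2*s by ring,
    show (1:ℂ)-(1-2*s) = 2*s by ring] at dup
  have hΓbval : Complex.Gamma (1-2*s)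
      = Complex.Gamma (1/2-s) * Complex.Gamma (1-s) / ((2:ℂ)^(2*s) * ↑(Real.sqrt π)) := by
    rw [eq_div_iff (mul_ne_zero hpow hsqrt)]; linear_combination -dup
  -- reflection at 1/2 + s
  have refl2 := Complex.Gamma_mul_Gamma_one_sub ((1:ℂ)/2 + s)
  rw [show (1:ℂ)-(1/2+s) = 1/2 - s by ring,
    show (↑π:ℂ)*((1:ℂ)/2+s) = ↑π/2 - (-(↑π*s)) by ring,
    Complex.sin_pi_div_two_sub, Complex.cos_neg] at refl2
  have hcos_ne : Complex.cos (↑π*s) ≠ 0 := by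
    intro h; rw [h, div_zero] at refl2; exact mul_ne_zero hGh hGmh refl2
  have F4 := (eq_div_iff hcos_ne).mp refl2
  have hcosval : Complex.cos (↑π*s) = ↑π / (Complex.Gamma (1/2+s) * Complex.Gamma (1/2-s)) := by
    rw [eq_div_iff (mul_ne_zero hGh hGmh)]; linear_combination F4
  -- sine difference
  have F5 : Complex.sin (↑π*(s + ↑τ*I)) - Complex.sin (↑π*(s - ↑τ*I))
      = 2 * Complex.cos (↑π*s) * (((Real.sinh (π*τ) : ℝ) : ℂ) * I) := by
    rw [show (↑π:ℂ)*(s+↑τ*I) = ↑π*s + ((π*τ : ℝ) : ℂ)*I by push_cast; ring,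
      show (↑π:ℂ)*(s-↑τ*I) = ↑π*s - ((π*τ : ℝ) : ℂ)*I by push_cast; ring,
      Complex.sin_add, Complex.sin_sub, Complex.sin_mul_I, ← Complex.ofReal_sinh]
    ring
  have step1 : Complex.Gamma (s - ↑τ*I) * Complex.Gamma (1-2*s) / Complex.Gamma (1 - (s + ↑τ*I))
       - Complex.Gamma (s + ↑τ*I) * Complex.Gamma (1-2*s) / Complex.Gamma (1 - (s - ↑τ*I))
      = Complex.Gamma (1-2*s) * Complex.Gamma (s + ↑τ*I) * Complex.Gamma (s - ↑τ*I) *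
          (Complex.sin (↑π*(s + ↑τ*I)) - Complex.sin (↑π*(s - ↑τ*I))) / ↑π := by
    rw [hG1pval, hG1mval, div_div_eq_mul_div, div_div_eq_mul_div]
    ring
  rw [step1, F5, hΓbval, hcosval]
  push_cast
  have c1 : (2:ℂ)^(2*s) * ((2:ℂ)^(2*s))⁻¹ = 1 := mul_inv_cancel₀ hpow
  have c2 : Complex.Gamma (1/2-s) * (Complex.Gamma (1/2-s))⁻¹ = 1 := mul_inv_cancel₀ hGmh
  have c3 : I * I⁻¹ = 1 := mul_inv_cancel₀ Complex.I_ne_zero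
  have c4 : ((π:ℝ):ℂ) * (((π:ℝ):ℂ))⁻¹ = 1 := mul_inv_cancel₀ hπ
  set R0 : ℂ := Complex.Gamma (1-s) * Complex.Gamma (s+(τ:ℂ)*I) * Complex.Gamma (s-(τ:ℂ)*I) *
    Complex.sinh (((π:ℝ):ℂ) * (τ:ℂ)) * (((Real.sqrt π : ℝ):ℂ))⁻¹ *
    (Complex.Gamma (1/2+s))⁻¹ with hR0
  linear_combination (R0 * (Complex.Gamma (1/2-s) * (Complex.Gamma (1/2-s))⁻¹) * (I*I⁻¹) *
      (((π:ℝ):ℂ) * (((π:ℝ):ℂ))⁻¹)) * c1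
    + (R0 * (I*I⁻¹) * (((π:ℝ):ℂ) * (((π:ℝ):ℂ))⁻¹)) * c2
    + (R0 * (((π:ℝ):ℂ) * (((π:ℝ):ℂ))⁻¹)) * c3 + R0 * c4

theorem stmt2 (s : ℂ) (hs1 : 0 < s.re) (hs2 : s.re < 1 / 2) (τ : ℝ) (hτ : 0 < τ) :
    IntegrableOn (fun t : ℝ => (Real.sin (t * τ) : ℂ) / ((Real.sinh (t / 2) : ℂ)) ^ (2 * s))
        (Ioi (0 : ℝ)) ∧
    ∫ t in Ioi (0 : ℝ), (Real.sin (t * τ) : ℂ) / ((Real.sinh (t / 2) : ℂ)) ^ (2 * s)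
      = ((Real.sinh (π * τ) / Real.sqrt π : ℝ) : ℂ) *
        (Complex.Gamma (s + τ * I) * Complex.Gamma (s - τ * I) * Complex.Gamma (1 - s) /
          Complex.Gamma (1 / 2 + s)) := by
  have hb : (0:ℝ) < (1 - 2*s).re := by
    have h : ((1:ℂ) - 2*s).re = 1 - 2*s.re := by simp
    rw [h]; linarith
  have hap : (0:ℝ) < (s + ↑τ*I).re := by
    have h : (s + (τ:ℂ)*I).re = s.re := by simp
    rw [h]; exact hs1
  have ham : (0:ℝ) < (s - ↑τ*I).re := by
    have h : (s - (τ:ℂ)*I).re = s.re := by simp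
    rw [h]; exact hs1
  obtain ⟨intM, eqM⟩ := substExp (s - ↑τ*I) (1 - 2*s) ham hb
  obtain ⟨intP, eqP⟩ := substExp (s + ↑τ*I) (1 - 2*s) hap hb
  simp only [show (1:ℂ)-2*s-1 = -(2*s) by ring] at intM intP eqM eqP
  set c : ℂ := (2:ℂ)^(2*s)/(2*I) with hc
  have hEq : ∀ t ∈ Ioi (0:ℝ), (Real.sin (t*τ) : ℂ) / ((Real.sinh (t/2) : ℂ))^(2*s)
      = c * (Complex.exp (-(s-↑τ*I)*t) * ((1 - Real.exp (-t) : ℝ) : ℂ)^(-(2*s))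
          - Complex.exp (-(s+↑τ*I)*t) * ((1 - Real.exp (-t) : ℝ) : ℂ)^(-(2*s))) :=
    fun t ht => pw s τ t ht
  have hInt2 : IntegrableOn (fun t : ℝ =>
      c * (Complex.exp (-(s-↑τ*I)*t) * ((1 - Real.exp (-t) : ℝ) : ℂ)^(-(2*s))
        - Complex.exp (-(s+↑τ*I)*t) * ((1 - Real.exp (-t) : ℝ) : ℂ)^(-(2*s)))) (Ioi 0) :=
    (intM.sub intP).const_mul c
  constructor
  · exact hInt2.congr_fun (fun t ht => (hEq t ht).symm) measurableSet_Ioi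
  · rw [setIntegral_congr_fun measurableSet_Ioi hEq, MeasureTheory.integral_const_mul,
      integral_sub intM intP, eqM, eqP,
      show (s - ↑τ*I) + (1-2*s) = 1 - (s + ↑τ*I) by ring,
      show (s + ↑τ*I) + (1-2*s) = 1 - (s - ↑τ*I) by ring]
    exact gammaAlg s hs1 hs2 τ
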